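/- Let H = (H0, H1) be a consistent partial condition over a nonempty finite set T. There exists a generalized Büchi condition consistent with H if and only if there are no P ∈ H0 and N ∈ H1 with P ⊆ N. Moreover, if there are no such P and N, then the specific generalized Büchi condition {T ∖ N : N is a ⊆-maximal element of H1} is consistent with H. -/

import Mathlib

/-- The generalized Büchi condition `{T \ N : N a ⊆-maximal element of H1}`. -/
def genBuchiOf {T : Type*} (H1 : Set (Set T)) : Set (Set T) :=
  {G | ∃ N ∈ H1, (∀ N' ∈ H1, ¬N ⊂ N') ∧ G = Set.univ \ N}

/-- A set `X` satisfies a generalized Büchi condition `B` if it intersects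
every member of `B`. -/
def GenBuchiSat {T : Type*} (B : Set (Set T)) (X : Set T) : Prop :=
  ∀ F ∈ B, (X ∩ F).Nonempty

lemma exists_maximal_above {T : Type*} [Fintype T] (H1 : Set (Set T))
    {X : Set T} (hX : X ∈ H1) :
    ∃ N ∈ H1, X ⊆ N ∧ ∀ N' ∈ H1, ¬N ⊂ N' := by
  have hfin : {N ∈ H1 | X ⊆ N}.Finite := (Set.finite_univ.subset (Set.subset_univ _))
  obtain ⟨N, hN, hmax⟩ := Set.Finite.exists_maximalFor id _ hfin ⟨X, hX, subset_rfl⟩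
  refine ⟨N, hN.1, hN.2, fun N' hN' hss => ?_⟩
  have : N' ∈ {N ∈ H1 | X ⊆ N} := ⟨hN', hN.2.trans hss.le⟩
  exact hss.ne (le_antisymm hss.le (hmax this hss.le))

/-- Existence of a generalized Büchi condition consistent with a
consistent partial condition `(H0, H1)` over a nonempty finite set `T` iff no
`P ∈ H0` is contained in some `N ∈ H1`; moreover in that case the specific
condition `{T \ N : N ⊆-maximal in H1}` is consistent with `(H0, H1)`. -/
theorem genBuchi_consistency {T : Type*} [Fintype T] [Nonempty T]
    (H0 H1 : Set (Set T)) (hcons : H0 ∩ H1 = ∅) :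
    ((∃ B : Set (Set T), (∀ X ∈ H0, GenBuchiSat B X) ∧ ∀ X ∈ H1, ¬GenBuchiSat B X) ↔
      ¬∃ P ∈ H0, ∃ N ∈ H1, P ⊆ N) ∧
    ((¬∃ P ∈ H0, ∃ N ∈ H1, P ⊆ N) →
      ((∀ X ∈ H0, GenBuchiSat (genBuchiOf H1) X) ∧
        ∀ X ∈ H1, ¬GenBuchiSat (genBuchiOf H1) X)) := by
  have main : (¬∃ P ∈ H0, ∃ N ∈ H1, P ⊆ N) →
      ((∀ X ∈ H0, GenBuchiSat (genBuchiOf H1) X) ∧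
        ∀ X ∈ H1, ¬GenBuchiSat (genBuchiOf H1) X) := by
    intro hno
    constructor
    · intro P hP F hF
      obtain ⟨N, hN, _, rfl⟩ := hF
      have hnsub : ¬P ⊆ N := fun h => hno ⟨P, hP, N, hN, h⟩
      obtain ⟨x, hxP, hxN⟩ := Set.not_subset.mp hnsub
      exact ⟨x, hxP, trivial, hxN⟩
    · intro X hX hsat
      obtain ⟨N, hN, hXN, hmax⟩ := exists_maximal_above H1 hX
      obtain ⟨x, hxX, _, hxN⟩ := hsat (Set.univ \ N) ⟨N, hN, hmax, rfl⟩
      exact hxN (hXN hxX)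
  refine ⟨⟨?_, fun h => ⟨genBuchiOf H1, main h⟩⟩, main⟩
  rintro ⟨B, hB0, hB1⟩ ⟨P, hP, N, hN, hPN⟩
  exact hB1 N hN fun F hF => ((hB0 P hP F hF).mono (Set.inter_subset_inter_left _ hPN))
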